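/- arXiv:0901.0501 — 2 statements merged into one kernel-verified Lean document; each statement's English description precedes it below -/
import Mathlib

section
/- Let f be a vector of n polynomials over an idempotent semiring with Kleene sequence ks. For all k ≥ 1 and all components i (1 ≤ i ≤ n), ks(k)_i equals the (finite) combine ⨁ of the yields Y(t) over all derivation trees t of f with height h(t) ≤ k and root variable label λ_v(t) = X_i, where the combine over the empty set is 0̄. (Proposition 2.) -/
universe u v w

/-- An idempotent semiring `(D, ⊕, ⊗, 0̄, 1̄)` (Definition 1). -/
structure IdemSemiring' (D : Type u) where
  add : D → D → D
  mul : D → D → D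
  zero : D
  one : D
  add_assoc : ∀ a b c, add (add a b) c = add a (add b c)
  add_comm : ∀ a b, add a b = add b a
  add_zero : ∀ a, add a zero = a
  mul_assoc : ∀ a b c, mul (mul a b) c = mul a (mul b c)
  one_mul : ∀ a, mul one a = a
  mul_one : ∀ a, mul a one = a
  mul_add : ∀ a b c, mul a (add b c) = add (mul a b) (mul a c)
  add_mul : ∀ a b c, mul (add a b) c = add (mul a c) (mul b c)
  mul_zero : ∀ a, mul a zero = zero
  zero_mul : ∀ a, mul zero a = zero
  add_idem : ∀ a, add a a = a

/-- The natural order: `a ⊑ b` iff `a ⊕ b = a` (Definition 2). -/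
def IdemSemiring'.le {D : Type u} (S : IdemSemiring' D) (a b : D) : Prop :=
  S.add a b = a

/-- Extend preserves inequality: `a ≠ b → a ⊗ c ≠ b ⊗ c` for `a, b, c ≠ 0̄` (Definition 3). -/
def PreservesIneq {D : Type u} (S : IdemSemiring' D) : Prop :=
  ∀ a b c : D, a ≠ S.zero → b ≠ S.zero → c ≠ S.zero → a ≠ b → S.mul a c ≠ S.mul b c

/-- Combine `⨁` of a list of semiring elements (`0̄` for the empty list). -/
def combineList {D : Type u} (S : IdemSemiring' D) (l : List D) : D :=
  l.foldr S.add S.zero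

/-- Extend `⨂` of a list of semiring elements (`1̄` for the empty list). -/
def prodList {D : Type u} (S : IdemSemiring' D) (l : List D) : D :=
  l.foldr S.mul S.one

/-- A monomial `a₁ X_{i₁} a₂ ⋯ a_s X_{i_s} a_{s+1}`, given by the list of pairs
`(a_j, i_j)` together with the final coefficient `a_{s+1}`. -/
structure Mono (D : Type u) (n : ℕ) where
  pairs : List (D × Fin n)
  last : D

/-- Value `a₁ ⊗ v_{i₁} ⊗ a₂ ⊗ ⋯ ⊗ v_{i_s} ⊗ a_{s+1}` of a monomial at a vector `v`. -/
def Mono.eval {D : Type u} {n : ℕ} (S : IdemSemiring' D) (m : Mono D n) (v : Fin n → D) : D :=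
  m.pairs.foldr (fun p acc => S.mul p.1 (S.mul (v p.2) acc)) m.last

/-- A polynomial is a finite combine `m₁ ⊕ ⋯ ⊕ m_s` of monomials. -/
abbrev SPoly (D : Type u) (n : ℕ) := List (Mono D n)

/-- Value `m₁(v) ⊕ ⋯ ⊕ m_s(v)` of a polynomial at a vector `v`. -/
def SPoly.eval {D : Type u} {n : ℕ} (S : IdemSemiring' D) (f : SPoly D n) (v : Fin n → D) : D :=
  f.foldr (fun m acc => S.add (Mono.eval S m v) acc) S.zero

/-- A vector of polynomials `f = (f₁, …, f_n)`. -/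
abbrev PolyVec (D : Type u) (n : ℕ) := Fin n → SPoly D n

/-- The map `D^n → D^n` induced by a vector of polynomials. -/
def applyPV {D : Type u} {n : ℕ} (S : IdemSemiring' D) (f : PolyVec D n) (v : Fin n → D) :
    Fin n → D :=
  fun i => SPoly.eval S (f i) v

/-- The Kleene sequence of `f` : `ks(0) = (0̄, …, 0̄)`, `ks(k+1) = f(ks(k))`. -/
def kleene {D : Type u} {n : ℕ} (S : IdemSemiring' D) (f : PolyVec D n) : ℕ → Fin n → D
  | 0 => fun _ => S.zero
  | k + 1 => applyPV S f (kleene S f k)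

/-- The componentwise order `⊑` on vectors. -/
def vle {D : Type u} {n : ℕ} (S : IdemSemiring' D) (u v : Fin n → D) : Prop :=
  ∀ i, S.le (u i) (v i)

/-- `g` is the greatest fixed point of the map induced by `f`. -/
def isGFP {D : Type u} {n : ℕ} (S : IdemSemiring' D) (f : PolyVec D n) (g : Fin n → D) : Prop :=
  applyPV S f g = g ∧ ∀ v, applyPV S f v = v → vle S v g

/-- Derivation trees of a vector of polynomials (Definition 6): each node is labelled
with a variable and a monomial. -/
inductive DTree (D : Type u) (n : ℕ) : Type u where
  | node : Fin n → Mono D n → List (DTree D n) → DTree D n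

/-- The variable label `λ_v` of the root. -/
def DTree.rootVar {D : Type u} {n : ℕ} : DTree D n → Fin n
  | .node i _ _ => i

/-- Well-formedness of a derivation tree with respect to `f` : every node labelled
`(X_i, m)` has `m` a monomial of `f_i`, and one child per variable occurrence of `m`,
the `j`-th child's root being labelled with the `j`-th variable of `m`. -/
inductive DTree.wf {D : Type u} {n : ℕ} (f : PolyVec D n) : DTree D n → Prop
  | node (i : Fin n) (m : Mono D n) (ts : List (DTree D n))
      (hm : m ∈ f i)
      (hlen : ts.length = m.pairs.length)
      (hvar : ∀ (j : ℕ) (hj : j < ts.length) (hj' : j < m.pairs.length),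
        (ts.get ⟨j, hj⟩).rootVar = (m.pairs.get ⟨j, hj'⟩).2)
      (hts : ∀ t ∈ ts, DTree.wf f t) :
      DTree.wf f (.node i m ts)

/-- Height of a derivation tree: the number of nodes on a longest root-to-leaf path. -/
def DTree.height {D : Type u} {n : ℕ} : DTree D n → ℕ
  | .node _ _ ts => 1 + ts.attach.foldr (fun t acc => max (DTree.height t.1) acc) 0
decreasing_by
  simp only [DTree.node.sizeOf_spec]
  have := List.sizeOf_lt_of_mem t.2
  omega

/-- Yield of a derivation tree: `Y(t) = a₁ ⊗ Y(t₁) ⊗ a₂ ⊗ ⋯ ⊗ Y(t_s) ⊗ a_{s+1}`. -/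
def DTree.yield {D : Type u} {n : ℕ} (S : IdemSemiring' D) : DTree D n → D
  | .node _ m ts =>
      (m.pairs.zip ts.attach).foldr
        (fun pt acc => S.mul pt.1.1 (S.mul (DTree.yield S pt.2.1) acc)) m.last
decreasing_by
  simp only [DTree.node.sizeOf_spec]
  have := List.sizeOf_lt_of_mem pt.2.2
  omega

section AuxProof

variable {D : Type u} {n : ℕ}

namespace AuxProof

lemma zero_add' (S : IdemSemiring' D) (a : D) : S.add S.zero a = a := by
  rw [S.add_comm]; exact S.add_zero a

lemma combine_cons (S : IdemSemiring' D) (a : D) (l : List D) :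
    combineList S (a :: l) = S.add a (combineList S l) := rfl

lemma combine_append (S : IdemSemiring' D) (l₁ l₂ : List D) :
    combineList S (l₁ ++ l₂) = S.add (combineList S l₁) (combineList S l₂) := by
  induction l₁ with
  | nil => simp [combineList, zero_add' S]
  | cons a l ih => simp [combineList] at ih ⊢; rw [ih, S.add_assoc]

lemma mul_combine (S : IdemSemiring' D) (a : D) (l : List D) :
    S.mul a (combineList S l) = combineList S (l.map (S.mul a)) := by
  induction l with
  | nil => simpa [combineList] using S.mul_zero a
  | cons b l ih => simp [combineList] at ih ⊢; rw [S.mul_add, ih]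

lemma combine_mul (S : IdemSemiring' D) (a : D) (l : List D) :
    S.mul (combineList S l) a = combineList S (l.map (fun x => S.mul x a)) := by
  induction l with
  | nil => simpa [combineList] using S.zero_mul a
  | cons b l ih => simp [combineList] at ih ⊢; rw [S.add_mul, ih]

lemma combine_flatMap {α : Type v} (S : IdemSemiring' D) (l : List α) (g : α → List D) :
    combineList S (l.flatMap g) = combineList S (l.map fun x => combineList S (g x)) := by
  induction l with
  | nil => rfl
  | cons a l ih =>
      simp only [List.flatMap_cons, List.map_cons, combine_cons, combine_append, ih]

lemma add_mem_combine (S : IdemSemiring' D) {a : D} {l : List D} (h : a ∈ l) :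
    S.add a (combineList S l) = combineList S l := by
  induction l with
  | nil => cases h
  | cons b l ih =>
      rcases List.mem_cons.1 h with rfl | h
      · rw [combine_cons, ← S.add_assoc, S.add_idem]
      · rw [combine_cons, S.add_comm b, ← S.add_assoc, ih h]

lemma combine_subset (S : IdemSemiring' D) {l₁ l₂ : List D} (h : ∀ x ∈ l₁, x ∈ l₂) :
    S.add (combineList S l₁) (combineList S l₂) = combineList S l₂ := by
  induction l₁ with
  | nil => exact zero_add' S _
  | cons a l ih =>
      rw [combine_cons, S.add_assoc, ih (fun x hx => h x (List.mem_cons_of_mem _ hx)),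
        add_mem_combine S (h a (List.mem_cons_self (a := a) (l := l)))]

lemma combine_congr_mem (S : IdemSemiring' D) {l₁ l₂ : List D} (h : ∀ x, x ∈ l₁ ↔ x ∈ l₂) :
    combineList S l₁ = combineList S l₂ := by
  have h1 := combine_subset S (l₁ := l₁) (l₂ := l₂) (fun x hx => (h x).1 hx)
  have h2 := combine_subset S (l₁ := l₂) (l₂ := l₁) (fun x hx => (h x).2 hx)
  rw [← h1, S.add_comm, h2]

lemma foldr_attach {α : Type v} {γ : Type w} (l : List α) (g : α → γ → γ) (c : γ) :
    l.attach.foldr (fun x acc => g x.1 acc) c = l.foldr g c := by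
  conv_rhs => rw [← List.attach_map_subtype_val l]
  rw [List.foldr_map]

lemma zip_attach_foldr {α : Type v} {β : Type w} {γ : Type u_1}
    (ps : List α) (ts : List β) (g : α → β → γ → γ) (c : γ) :
    (ps.zip ts.attach).foldr (fun pt acc => g pt.1 pt.2.1 acc) c =
    (ps.zip ts).foldr (fun pt acc => g pt.1 pt.2 acc) c := by
  conv_rhs => rw [← List.attach_map_subtype_val ts]
  rw [List.zip_map_right, List.foldr_map]
  rfl

lemma height_node (i : Fin n) (m : Mono D n) (ts : List (DTree D n)) :
    DTree.height (.node i m ts : DTree D n)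
      = 1 + ts.foldr (fun t acc => max (DTree.height t) acc) 0 := by
  rw [DTree.height]
  rw [foldr_attach ts (fun t acc => max (DTree.height t) acc) 0]

lemma one_le_height (t : DTree D n) : 1 ≤ DTree.height t := by
  cases t with
  | node i m ts => rw [height_node]; omega

lemma foldr_max_le (l : List (DTree D n)) (k : ℕ) :
    l.foldr (fun t acc => max (DTree.height t) acc) 0 ≤ k ↔ ∀ t ∈ l, DTree.height t ≤ k := by
  induction l with
  | nil => simp
  | cons a l ih => simp [Nat.max_le, ih]

lemma height_node_le (i : Fin n) (m : Mono D n) (ts : List (DTree D n)) (k : ℕ) :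
    DTree.height (.node i m ts : DTree D n) ≤ k + 1 ↔ ∀ t ∈ ts, DTree.height t ≤ k := by
  rw [height_node, ← foldr_max_le]
  omega

lemma yield_node (S : IdemSemiring' D) (i : Fin n) (m : Mono D n) (ts : List (DTree D n)) :
    DTree.yield S (.node i m ts : DTree D n)
      = (m.pairs.zip ts).foldr
          (fun pt acc => S.mul pt.1.1 (S.mul (DTree.yield S pt.2) acc)) m.last := by
  rw [DTree.yield]
  exact zip_attach_foldr m.pairs ts (fun a t acc => S.mul a.1 (S.mul (DTree.yield S t) acc)) m.last

/-- All derivation trees of `f` of height at most `k` with root variable `i`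
(possibly with repetitions). -/
def treesUpTo (f : PolyVec D n) : ℕ → Fin n → List (DTree D n)
  | 0, _ => []
  | k+1, i => (f i).flatMap fun m =>
      (List.sections (m.pairs.map fun p => treesUpTo f k p.2)).map fun ts =>
        .node i m ts

lemma mem_treesUpTo (f : PolyVec D n) :
    ∀ (k : ℕ) (t : DTree D n) (i : Fin n),
      t ∈ treesUpTo f k i ↔ (DTree.wf f t ∧ DTree.height t ≤ k ∧ DTree.rootVar t = i) := by
  intro k
  induction k with
  | zero =>
      intro t i
      simp only [treesUpTo, List.not_mem_nil, false_iff]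
      rintro ⟨-, hh, -⟩
      exact absurd (le_trans (one_le_height t) hh) (by omega)
  | succ k ih =>
      rintro ⟨i', m, ts⟩ i
      constructor
      · intro h
        simp only [treesUpTo, List.mem_flatMap, List.mem_map] at h
        obtain ⟨m', hm', ts', hts', heq⟩ := h
        injection heq with h1 h2 h3
        subst h1
        rw [h2] at hm' hts'
        rw [h3] at hts'
        have hsec := List.mem_sections.1 hts'
        have hget := List.forall₂_iff_get.1 hsec
        have hlen : ts.length = m.pairs.length := by
          simpa using hget.1
        have hmem : ∀ (j : ℕ) (hj : j < ts.length),
            ts.get ⟨j, hj⟩ ∈ treesUpTo f k (m.pairs.get ⟨j, by omega⟩).2 := by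
          intro j hj
          have := hget.2 j hj (by simpa using (by omega : j < m.pairs.length))
          simpa using this
        refine ⟨?_, ?_, rfl⟩
        · refine DTree.wf.node i m ts hm' hlen ?_ ?_
          · intro j hj hj'
            exact ((ih _ _).1 (hmem j hj)).2.2
          · intro t ht
            obtain ⟨j, hj, rfl⟩ := List.mem_iff_get.1 ht
            exact ((ih _ _).1 (hmem j.1 j.2)).1
        · rw [height_node_le]
          intro t ht
          obtain ⟨j, hj, rfl⟩ := List.mem_iff_get.1 ht
          exact ((ih _ _).1 (hmem j.1 j.2)).2.1
      · rintro ⟨hwf, hh, hrv⟩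
        have hi : i' = i := hrv
        cases hwf with
        | node _ _ _ hm hlen hvar hts =>
          rw [← hi]
          simp only [treesUpTo, List.mem_flatMap, List.mem_map]
          refine ⟨m, hm, ts, ?_, rfl⟩
          rw [List.mem_sections]
          apply List.forall₂_of_length_eq_of_get
          · simpa using hlen
          · intro j h1 h2
            have hj' : j < m.pairs.length := by simpa using h2
            have hht : DTree.height (ts.get ⟨j, h1⟩) ≤ k :=
              (height_node_le i' m ts k).1 hh _ (List.get_mem ts _)
            have := (ih (ts.get ⟨j, h1⟩) (m.pairs.get ⟨j, hj'⟩).2).2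
              ⟨hts _ (List.get_mem ts _), hht, hvar j h1 hj'⟩
            simpa using this

lemma map_mul_combine (S : IdemSemiring' D) {α : Type v} (c : D) (G : α → D) (l : List α) :
    combineList S (l.map fun s => S.mul c (G s)) = S.mul c (combineList S (l.map G)) := by
  rw [mul_combine, List.map_map]; rfl

lemma foldr_combine (S : IdemSemiring' D) (f : PolyVec D n) (k : ℕ)
    (v : Fin n → D)
    (hv : ∀ j, v j = combineList S ((treesUpTo f k j).map (DTree.yield S))) :
    ∀ (ps : List (D × Fin n)) (a : D),
      ps.foldr (fun p acc => S.mul p.1 (S.mul (v p.2) acc)) a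
      = combineList S ((List.sections (ps.map fun p => treesUpTo f k p.2)).map
          fun ts => (ps.zip ts).foldr
            (fun pt acc => S.mul pt.1.1 (S.mul (DTree.yield S pt.2) acc)) a) := by
  intro ps
  induction ps with
  | nil =>
      intro a
      simp only [List.foldr_nil, List.map_nil, List.sections, List.map_cons, List.map_nil,
        List.zip_nil_right]
      simp [combineList, S.add_zero]
  | cons p ps ih =>
      intro a
      have hsec : List.sections ((p :: ps).map fun q => treesUpTo f k q.2)
          = (List.sections (ps.map fun q => treesUpTo f k q.2)).flatMap fun s =>
              (treesUpTo f k p.2).map fun t => t :: s := by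
        simp [List.sections]
      rw [hsec, List.map_flatMap, combine_flatMap]
      have hinner : ∀ s : List (DTree D n),
          combineList S (((treesUpTo f k p.2).map fun t => t :: s).map
            fun ts => ((p :: ps).zip ts).foldr
              (fun pt acc => S.mul pt.1.1 (S.mul (DTree.yield S pt.2) acc)) a)
          = S.mul p.1 (S.mul (v p.2)
              ((ps.zip s).foldr
                (fun pt acc => S.mul pt.1.1 (S.mul (DTree.yield S pt.2) acc)) a)) := by
        intro s
        rw [List.map_map]
        have : ((fun ts => ((p :: ps).zip ts).foldr
              (fun pt acc => S.mul pt.1.1 (S.mul (DTree.yield S pt.2) acc)) a)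
            ∘ fun t => t :: s)
            = fun t => S.mul p.1 (S.mul (DTree.yield S t)
                ((ps.zip s).foldr
                  (fun pt acc => S.mul pt.1.1 (S.mul (DTree.yield S pt.2) acc)) a)) := by
          funext t; rfl
        rw [this]
        set d := (ps.zip s).foldr
            (fun pt acc => S.mul pt.1.1 (S.mul (DTree.yield S pt.2) acc)) a with hd
        have h2 : combineList S ((treesUpTo f k p.2).map
              fun t => S.mul p.1 (S.mul (DTree.yield S t) d))
            = S.mul p.1 (combineList S ((treesUpTo f k p.2).map
              fun t => S.mul (DTree.yield S t) d)) :=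
          map_mul_combine S p.1 (fun t => S.mul (DTree.yield S t) d) _
        rw [h2]
        congr 1
        have : ((treesUpTo f k p.2).map fun t => S.mul (DTree.yield S t) d)
            = ((treesUpTo f k p.2).map (DTree.yield S)).map fun y => S.mul y d := by
          rw [List.map_map]; rfl
        rw [this, ← combine_mul, ← hv]
      calc S.mul p.1 (S.mul (v p.2)
              (ps.foldr (fun q acc => S.mul q.1 (S.mul (v q.2) acc)) a))
          = S.mul p.1 (S.mul (v p.2)
              (combineList S ((List.sections (ps.map fun q => treesUpTo f k q.2)).map
                fun ts => (ps.zip ts).foldr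
                  (fun pt acc => S.mul pt.1.1 (S.mul (DTree.yield S pt.2) acc)) a))) := by
            rw [ih a]
        _ = _ := by
            rw [← map_mul_combine S (v p.2), ← map_mul_combine S p.1]
            apply combine_congr_mem
            intro x
            constructor
            · rintro hx
              simp only [List.mem_map] at hx ⊢
              obtain ⟨s, hs, rfl⟩ := hx
              exact ⟨s, hs, hinner s⟩
            · rintro hx
              simp only [List.mem_map] at hx ⊢
              obtain ⟨s, hs, rfl⟩ := hx
              exact ⟨s, hs, (hinner s).symm⟩

lemma kleene_eq (S : IdemSemiring' D) (f : PolyVec D n) :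
    ∀ (k : ℕ) (i : Fin n),
      kleene S f k i = combineList S ((treesUpTo f k i).map (DTree.yield S)) := by
  intro k
  induction k with
  | zero => intro i; rfl
  | succ k ih =>
      intro i
      have heval : kleene S f (k+1) i
          = combineList S ((f i).map fun m => Mono.eval S m (kleene S f k)) := by
        show SPoly.eval S (f i) (kleene S f k) = _
        rw [SPoly.eval, combineList, List.foldr_map]
      rw [heval]
      show _ = combineList S (((f i).flatMap fun m =>
        (List.sections (m.pairs.map fun p => treesUpTo f k p.2)).map fun ts =>
          (DTree.node i m ts : DTree D n)).map (DTree.yield S))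
      rw [List.map_flatMap, combine_flatMap]
      congr 1
      apply List.map_congr_left
      intro m _
      rw [List.map_map]
      simp only [Mono.eval]
      rw [foldr_combine S f k _ ih m.pairs m.last]
      congr 1
      apply List.map_congr_left
      intro ts _
      simp only [Function.comp]
      exact (yield_node S i m ts).symm

end AuxProof

end AuxProof

/-- Proposition 2: for `k ≥ 1`, `ks(k)ᵢ` is the combine of the yields of all derivation
trees of `f` of height at most `k` whose root is labelled with the variable `Xᵢ`
(the combine over the empty set being `0̄`). -/
theorem kleene_eq_combine_yields {D : Type u} {n : ℕ} (S : IdemSemiring' D)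
    (f : PolyVec D n) (k : ℕ) (hk : 1 ≤ k) (i : Fin n) :
    ∃ l : List (DTree D n), l.Nodup ∧
      (∀ t : DTree D n, t ∈ l ↔ (DTree.wf f t ∧ DTree.height t ≤ k ∧ DTree.rootVar t = i)) ∧
      kleene S f k i = combineList S (l.map (DTree.yield S)) := by
  classical
  refine ⟨(AuxProof.treesUpTo f k i).dedup, List.nodup_dedup _, ?_, ?_⟩
  · intro t
    rw [List.mem_dedup]
    exact AuxProof.mem_treesUpTo f k t i
  · rw [AuxProof.kleene_eq S f k i]
    apply AuxProof.combine_congr_mem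
    intro x
    simp only [List.mem_map, List.mem_dedup]
end

section
/- Let f be a vector of n polynomials over the integer min-plus semiring S_int = (ℤ ∪ {∞}, min, +, ∞, 0), with Kleene sequence ks. Then f has a greatest fixed point if and only if ks(n) = ks(n+1); and in that case ks(n) is the greatest fixed point of f. (Corollary 1.) -/
universe u v w

/-- The integer min-plus semiring `S_int = (ℤ ∪ {∞}, min, +, ∞, 0)` of Example 1. -/
def Sint : IdemSemiring' (WithTop ℤ) where
  add := min
  mul := (· + ·)
  zero := ⊤
  one := 0
  add_assoc := fun a b c => min_assoc a b c
  add_comm := fun a b => min_comm a b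
  add_zero := fun a => min_eq_left le_top
  mul_assoc := fun a b c => add_assoc a b c
  one_mul := fun a => zero_add a
  mul_one := fun a => add_zero a
  mul_add := fun a b c => by
    rcases le_total b c with h | h
    · rw [min_eq_left h, min_eq_left (add_le_add_right h a)]
    · rw [min_eq_right h, min_eq_right (add_le_add_right h a)]
  add_mul := fun a b c => by
    rcases le_total a b with h | h
    · rw [min_eq_left h, min_eq_left (add_le_add_left h c)]
    · rw [min_eq_right h, min_eq_right (add_le_add_left h c)]
  mul_zero := fun a => by simp
  zero_mul := fun a => by simp
  add_idem := fun a => min_self a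

namespace SintGFP

open List

variable {n : ℕ}

lemma sint_le_iff (a b : WithTop ℤ) : Sint.le a b ↔ a ≤ b := by
  simp [IdemSemiring'.le, Sint, min_eq_left_iff]

lemma foldr_eval (v : Fin n → WithTop ℤ) (ps : List (WithTop ℤ × Fin n)) (c : WithTop ℤ) :
    ps.foldr (fun p acc => Sint.mul p.1 (Sint.mul (v p.2) acc)) c
      = (ps.map (fun p => p.1 + v p.2)).sum + c := by
  induction ps with
  | nil => simp
  | cons p ps ih =>
      simp only [List.foldr_cons, List.map_cons, List.sum_cons, ih]
      show p.1 + (v p.2 + _) = _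
      rw [add_assoc, add_assoc]

lemma mono_eval_eq (m : Mono (WithTop ℤ) n) (v : Fin n → WithTop ℤ) :
    Mono.eval Sint m v = (m.pairs.map (fun p => p.1 + v p.2)).sum + m.last :=
  foldr_eval v m.pairs m.last

lemma mono_eval_mono {m : Mono (WithTop ℤ) n} {v w : Fin n → WithTop ℤ}
    (h : ∀ j, v j ≤ w j) : Mono.eval Sint m v ≤ Mono.eval Sint m w := by
  rw [mono_eval_eq, mono_eval_eq]
  exact add_le_add_left (List.sum_le_sum (fun p _ => add_le_add_right (h p.2) _)) _

lemma spoly_eval_eq (F : SPoly (WithTop ℤ) n) (v : Fin n → WithTop ℤ) :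
    SPoly.eval Sint F v = F.foldr (fun m acc => min (Mono.eval Sint m v) acc) ⊤ := rfl

lemma spoly_le_mono {F : SPoly (WithTop ℤ) n} {m : Mono (WithTop ℤ) n} (hm : m ∈ F)
    (v : Fin n → WithTop ℤ) : SPoly.eval Sint F v ≤ Mono.eval Sint m v := by
  rw [spoly_eval_eq]
  induction F with
  | nil => simp at hm
  | cons a F ih =>
      rcases List.mem_cons.1 hm with h | h
      · subst h; exact min_le_left _ _
      · exact le_trans (min_le_right _ _) (ih h)

lemma spoly_attained (F : SPoly (WithTop ℤ) n) (v : Fin n → WithTop ℤ) :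
    SPoly.eval Sint F v = ⊤ ∨ ∃ m ∈ F, SPoly.eval Sint F v = Mono.eval Sint m v := by
  rw [spoly_eval_eq]
  induction F with
  | nil => simp
  | cons a F ih =>
      simp only [List.foldr_cons]
      rcases le_total (Mono.eval Sint a v) (F.foldr (fun m acc => min (Mono.eval Sint m v) acc) ⊤) with h | h
      · exact Or.inr ⟨a, List.mem_cons_self, min_eq_left h⟩
      · rw [min_eq_right h]
        rcases ih with h' | ⟨m, hm, h'⟩
        · exact Or.inl h'
        · exact Or.inr ⟨m, List.mem_cons_of_mem _ hm, h'⟩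

lemma spoly_eval_mono (F : SPoly (WithTop ℤ) n) {v w : Fin n → WithTop ℤ}
    (h : ∀ j, v j ≤ w j) : SPoly.eval Sint F v ≤ SPoly.eval Sint F w := by
  rw [spoly_eval_eq, spoly_eval_eq]
  induction F with
  | nil => simp
  | cons a F ih => exact min_le_min (mono_eval_mono h) ih

lemma kleene_succ_le (f : PolyVec (WithTop ℤ) n) : ∀ k i,
    kleene Sint f (k + 1) i ≤ kleene Sint f k i := by
  intro k
  induction k with
  | zero => intro i; exact le_top
  | succ k ih => intro i; exact spoly_eval_mono (f i) ih

lemma fix_le_kleene {f : PolyVec (WithTop ℤ) n} {v : Fin n → WithTop ℤ}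
    (hv : applyPV Sint f v = v) : ∀ k i, v i ≤ kleene Sint f k i := by
  intro k
  induction k with
  | zero => intro i; exact le_top
  | succ k ih =>
      intro i
      calc v i = applyPV Sint f v i := by rw [hv]
        _ ≤ kleene Sint f (k+1) i := spoly_eval_mono (f i) ih

end SintGFP
namespace SintGFP
variable {n : ℕ}

/-- Derivation trees (untyped). -/
inductive RT (n : ℕ) : Type
  | node (i : Fin n) (m : Mono (WithTop ℤ) n) (cs : List (RT n)) : RT n

namespace RT

def root : RT n → Fin n
  | .node i _ _ => i

/-- sum of all coefficients of a monomial -/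
def csum (m : Mono (WithTop ℤ) n) : WithTop ℤ := (m.pairs.map Prod.fst).sum + m.last

def wt : RT n → WithTop ℤ
  | .node _ m cs => csum m + (cs.attach.map (fun x => wt x.1)).sum
decreasing_by simp_wf; have := List.sizeOf_lt_of_mem x.2; omega

def sz : RT n → ℕ
  | .node _ _ cs => 1 + (cs.attach.map (fun x => sz x.1)).sum
decreasing_by simp_wf; have := List.sizeOf_lt_of_mem x.2; omega

def ht : RT n → ℕ
  | .node _ _ cs => 1 + (cs.attach.map (fun x => ht x.1)).foldr max 0
decreasing_by simp_wf; have := List.sizeOf_lt_of_mem x.2; omega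

lemma map_attach_eq {α β : Type*} (l : List α) (f : α → β) :
    l.attach.map (fun x => f x.1) = l.map f := by
  simp [List.attach_map_val]

lemma wt_node (i : Fin n) (m : Mono (WithTop ℤ) n) (cs : List (RT n)) :
    wt (.node i m cs) = csum m + (cs.map wt).sum := by
  rw [wt.eq_1, map_attach_eq]

lemma sz_node (i : Fin n) (m : Mono (WithTop ℤ) n) (cs : List (RT n)) :
    sz (.node i m cs) = 1 + (cs.map sz).sum := by
  rw [sz.eq_1, map_attach_eq]

lemma ht_node (i : Fin n) (m : Mono (WithTop ℤ) n) (cs : List (RT n)) :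
    ht (.node i m cs) = 1 + (cs.map ht).foldr max 0 := by
  rw [ht.eq_1, map_attach_eq]

inductive WF (f : PolyVec (WithTop ℤ) n) : RT n → Prop
  | node (i : Fin n) (m : Mono (WithTop ℤ) n) (cs : List (RT n)) (hm : m ∈ f i)
      (hroots : cs.map RT.root = m.pairs.map Prod.snd)
      (hcs : ∀ t ∈ cs, WF f t) : WF f (.node i m cs)

end RT
end SintGFP
namespace SintGFP
variable {n : ℕ}

lemma sum_map_add {α : Type*} (l : List α) (F G : α → WithTop ℤ) :
    (l.map (fun x => F x + G x)).sum = (l.map F).sum + (l.map G).sum := by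
  induction l with
  | nil => simp
  | cons a l ih => simp only [List.map_cons, List.sum_cons, ih, add_add_add_comm]

lemma le_foldr_max {l : List ℕ} {x : ℕ} (hx : x ∈ l) : x ≤ l.foldr max 0 := by
  induction l with
  | nil => simp at hx
  | cons a l ih =>
      rcases List.mem_cons.1 hx with h | h
      · subst h; exact le_max_left _ _
      · exact le_trans (ih h) (le_max_right _ _)

lemma foldr_max_le {l : List ℕ} {k : ℕ} (h : ∀ x ∈ l, x ≤ k) : l.foldr max 0 ≤ k := by
  induction l with
  | nil => simp
  | cons a l ih =>
      exact max_le (h a List.mem_cons_self) (ih (fun x hx => h x (List.mem_cons_of_mem _ hx)))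

lemma mono_eval_le_wt {m : Mono (WithTop ℤ) n} {cs : List (RT n)} {v : Fin n → WithTop ℤ}
    (hroots : cs.map RT.root = m.pairs.map Prod.snd)
    (h : ∀ t ∈ cs, v t.root ≤ t.wt) :
    Mono.eval Sint m v ≤ RT.csum m + (cs.map RT.wt).sum := by
  rw [mono_eval_eq, RT.csum]
  have e1 : (m.pairs.map (fun p => p.1 + v p.2)).sum
      = (m.pairs.map Prod.fst).sum + (m.pairs.map (fun p => v p.2)).sum :=
    sum_map_add _ _ _
  have e2 : m.pairs.map (fun p => v p.2) = cs.map (fun t => v t.root) := by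
    have : m.pairs.map (fun p => v p.2) = (m.pairs.map Prod.snd).map v := by
      rw [List.map_map]; rfl
    rw [this, ← hroots, List.map_map]; rfl
  have e3 : (cs.map (fun t => v t.root)).sum ≤ (cs.map RT.wt).sum :=
    List.sum_le_sum h
  calc (m.pairs.map (fun p => p.1 + v p.2)).sum + m.last
      = ((m.pairs.map Prod.fst).sum + m.last) + (cs.map (fun t => v t.root)).sum := by
        rw [e1, e2, add_right_comm]
    _ ≤ ((m.pairs.map Prod.fst).sum + m.last) + (cs.map RT.wt).sum :=
        add_le_add_right e3 _

lemma sz_mem_le {cs : List (RT n)} {t : RT n} (h : t ∈ cs) :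
    t.sz ≤ (cs.map RT.sz).sum :=
  List.single_le_sum (fun x _ => Nat.zero_le x) _ (List.mem_map_of_mem (f := RT.sz) h)

/-- Lemma D: any fixed point is below the weight of every derivation tree. -/
lemma fix_le_wt {f : PolyVec (WithTop ℤ) n} {g : Fin n → WithTop ℤ}
    (hg : applyPV Sint f g = g) :
    ∀ (N : ℕ) (t : RT n), t.sz ≤ N → RT.WF f t → g t.root ≤ t.wt := by
  intro N
  induction N with
  | zero => rintro ⟨i, m, cs⟩ h; rw [RT.sz_node] at h; omega
  | succ N ih =>
      rintro ⟨i, m, cs⟩ hsz hwf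
      cases hwf with
      | node _ _ _ hm hroots hcs =>
        rw [RT.wt_node]
        have hchild : ∀ t ∈ cs, g t.root ≤ t.wt := by
          intro t ht
          refine ih t ?_ (hcs t ht)
          rw [RT.sz_node] at hsz
          have := sz_mem_le ht
          omega
        calc g i = applyPV Sint f g i := by rw [hg]
          _ ≤ Mono.eval Sint m g := spoly_le_mono hm g
          _ ≤ _ := mono_eval_le_wt hroots hchild

/-- Lemma A1: `ks(k)` is below the weight of every tree of height `≤ k`. -/
lemma kleene_le_wt (f : PolyVec (WithTop ℤ) n) :
    ∀ (k : ℕ) (t : RT n), RT.WF f t → t.ht ≤ k → kleene Sint f k t.root ≤ t.wt := by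
  intro k
  induction k with
  | zero => rintro ⟨i, m, cs⟩ _ h; rw [RT.ht_node] at h; omega
  | succ k ih =>
      rintro ⟨i, m, cs⟩ hwf hht
      cases hwf with
      | node _ _ _ hm hroots hcs =>
        rw [RT.wt_node]
        have hchild : ∀ t ∈ cs, kleene Sint f k t.root ≤ t.wt := by
          intro t ht
          refine ih t (hcs t ht) ?_
          rw [RT.ht_node] at hht
          have := le_foldr_max (List.mem_map_of_mem (f := RT.ht) ht)
          omega
        calc kleene Sint f (k+1) i ≤ Mono.eval Sint m (kleene Sint f k) :=
              spoly_le_mono hm _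
          _ ≤ _ := mono_eval_le_wt hroots hchild

/-- build children for A2 -/
lemma children_exist {f : PolyVec (WithTop ℤ) n} {k : ℕ} {v : Fin n → WithTop ℤ}
    (Hv : ∀ j, v j ≠ ⊤ → ∃ t : RT n, RT.WF f t ∧ t.root = j ∧ t.ht ≤ k ∧ t.wt ≤ v j) :
    ∀ (ps : List (WithTop ℤ × Fin n)) (c E : WithTop ℤ),
      E = ps.foldr (fun p acc => p.1 + (v p.2 + acc)) c → E ≠ ⊤ →
      ∃ cs : List (RT n), cs.map RT.root = ps.map Prod.snd ∧
        (∀ t ∈ cs, RT.WF f t ∧ t.ht ≤ k) ∧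
        (ps.map Prod.fst).sum + ((cs.map RT.wt).sum + c) ≤ E := by
  intro ps
  induction ps with
  | nil =>
      intro c E hE hne
      exact ⟨[], by simp, by simp, by simp [hE]⟩
  | cons p ps ih =>
      intro c E hE hne
      simp only [List.foldr_cons] at hE
      set E' := ps.foldr (fun p acc => p.1 + (v p.2 + acc)) c with hE'
      have h1 : p.1 ≠ ⊤ := by
        intro h; rw [hE, h] at hne; simp at hne
      have h2 : v p.2 ≠ ⊤ := by
        intro h; rw [hE, h] at hne; simp [WithTop.add_eq_top] at hne
      have h3 : E' ≠ ⊤ := by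
        intro h; rw [hE, h] at hne; simp [WithTop.add_eq_top] at hne
      obtain ⟨t, hwf, hroot, hht, hwt⟩ := Hv p.2 h2
      obtain ⟨cs, hcs1, hcs2, hcs3⟩ := ih c E' rfl h3
      refine ⟨t :: cs, by simp [hroot, hcs1], ?_, ?_⟩
      · intro t' ht'
        rcases List.mem_cons.1 ht' with h | h
        · subst h; exact ⟨hwf, hht⟩
        · exact hcs2 t' h
      · rw [hE]
        simp only [List.map_cons, List.sum_cons]
        calc p.1 + (ps.map Prod.fst).sum + ((t.wt + (cs.map RT.wt).sum) + c)
            = p.1 + (t.wt + ((ps.map Prod.fst).sum + ((cs.map RT.wt).sum + c))) := by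
              rw [add_assoc, add_assoc]
              congr 1
              rw [← add_assoc, ← add_assoc, add_comm (ps.map Prod.fst).sum t.wt, add_assoc,
                add_assoc]
          _ ≤ p.1 + (v p.2 + E') := by
              exact add_le_add_right (add_le_add hwt hcs3) _

/-- Lemma A2: if `ks(k)_i ≠ ⊤` there is a tree of height `≤ k` with weight `≤ ks(k)_i`. -/
lemma wt_le_kleene (f : PolyVec (WithTop ℤ) n) :
    ∀ (k : ℕ) (i : Fin n), kleene Sint f k i ≠ ⊤ →
      ∃ t : RT n, RT.WF f t ∧ t.root = i ∧ t.ht ≤ k ∧ t.wt ≤ kleene Sint f k i := by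
  intro k
  induction k with
  | zero => intro i h; exact absurd rfl h
  | succ k ih =>
      intro i hne
      have hk : kleene Sint f (k+1) i = SPoly.eval Sint (f i) (kleene Sint f k) := rfl
      rcases spoly_attained (f i) (kleene Sint f k) with h | ⟨m, hm, h⟩
      · rw [hk] at hne; exact absurd h hne
      · rw [hk, h] at hne ⊢
        have := children_exist ih m.pairs m.last (Mono.eval Sint m (kleene Sint f k)) rfl hne
        obtain ⟨cs, hroots, hwfht, hsum⟩ := this
        refine ⟨.node i m cs, RT.WF.node i m cs hm hroots (fun t ht => (hwfht t ht).1),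
          rfl, ?_, ?_⟩
        · rw [RT.ht_node]
          have : (cs.map RT.ht).foldr max 0 ≤ k := by
            refine foldr_max_le ?_
            intro x hx
            obtain ⟨t, ht, rfl⟩ := List.mem_map.1 hx
            exact (hwfht t ht).2
          omega
        · rw [RT.wt_node, RT.csum]
          calc (m.pairs.map Prod.fst).sum + m.last + (cs.map RT.wt).sum
              = (m.pairs.map Prod.fst).sum + ((cs.map RT.wt).sum + m.last) := by
                rw [add_assoc, add_comm m.last]
            _ ≤ Mono.eval Sint m (kleene Sint f k) := hsum

end SintGFP
namespace SintGFP
variable {n : ℕ}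

structure Frame (n : ℕ) where
  i : Fin n
  m : Mono (WithTop ℤ) n
  pre : List (RT n)
  hv : Fin n
  post : List (RT n)

def Frame.plug (fr : Frame n) (s : RT n) : RT n := .node fr.i fr.m (fr.pre ++ s :: fr.post)

def Frame.WFF (f : PolyVec (WithTop ℤ) n) (fr : Frame n) : Prop :=
  fr.m ∈ f fr.i ∧
  (fr.pre.map RT.root ++ fr.hv :: fr.post.map RT.root) = fr.m.pairs.map Prod.snd ∧
  (∀ t ∈ fr.pre, RT.WF f t) ∧ (∀ t ∈ fr.post, RT.WF f t)

def Frame.w (fr : Frame n) : WithTop ℤ :=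
  RT.csum fr.m + ((fr.pre.map RT.wt).sum + (fr.post.map RT.wt).sum)

def Frame.s (fr : Frame n) : ℕ := 1 + ((fr.pre.map RT.sz).sum + (fr.post.map RT.sz).sum)

def plugL (L : List (Frame n)) (s : RT n) : RT n := L.foldr Frame.plug s

def CtxWF (f : PolyVec (WithTop ℤ) n) : Fin n → List (Frame n) → Fin n → Prop
  | i, [], j => i = j
  | i, fr :: L, j => fr.i = i ∧ Frame.WFF f fr ∧ CtxWF f fr.hv L j

def cw (L : List (Frame n)) : WithTop ℤ := (L.map Frame.w).sum
def csz (L : List (Frame n)) : ℕ := (L.map Frame.s).sum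

lemma plugL_nil (s : RT n) : plugL [] s = s := rfl
lemma plugL_cons (fr : Frame n) (L : List (Frame n)) (s : RT n) :
    plugL (fr :: L) s = fr.plug (plugL L s) := rfl

lemma plugL_append (L1 L2 : List (Frame n)) (s : RT n) :
    plugL (L1 ++ L2) s = plugL L1 (plugL L2 s) := by
  simp [plugL, List.foldr_append]

lemma wt_plug (fr : Frame n) (s : RT n) : (fr.plug s).wt = fr.w + s.wt := by
  rw [Frame.plug, RT.wt_node, Frame.w]
  rw [List.map_append, List.map_cons, List.sum_append, List.sum_cons]
  rw [add_assoc]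
  congr 1
  rw [add_comm s.wt, ← add_assoc]

lemma sz_plug (fr : Frame n) (s : RT n) : (fr.plug s).sz = fr.s + s.sz := by
  rw [Frame.plug, RT.sz_node, Frame.s]
  rw [List.map_append, List.map_cons, List.sum_append, List.sum_cons]
  omega

lemma wt_plugL (L : List (Frame n)) (s : RT n) : (plugL L s).wt = cw L + s.wt := by
  induction L with
  | nil => simp [plugL_nil, cw]
  | cons fr L ih =>
      rw [plugL_cons, wt_plug, ih]
      simp [cw, List.map_cons, List.sum_cons, add_assoc]

lemma sz_plugL (L : List (Frame n)) (s : RT n) : (plugL L s).sz = csz L + s.sz := by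
  induction L with
  | nil => simp [plugL_nil, csz]
  | cons fr L ih =>
      rw [plugL_cons, sz_plug, ih]
      simp [csz, List.map_cons, List.sum_cons]
      omega

lemma root_plugL {f : PolyVec (WithTop ℤ) n} :
    ∀ (L : List (Frame n)) (i j : Fin n) (s : RT n), CtxWF f i L j → s.root = j →
      (plugL L s).root = i := by
  intro L i j s h hs
  cases L with
  | nil => rw [plugL_nil, hs]; exact h.symm
  | cons fr L => exact h.1

lemma WF_plugL {f : PolyVec (WithTop ℤ) n} :
    ∀ (L : List (Frame n)) (i j : Fin n) (s : RT n), CtxWF f i L j → RT.WF f s →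
      s.root = j → RT.WF f (plugL L s) := by
  intro L
  induction L with
  | nil => intro i j s _ hs _; exact hs
  | cons fr L ih =>
      rintro i j s ⟨hfi, hwff, hrest⟩ hs hroot
      rw [plugL_cons]
      have hu : RT.WF f (plugL L s) := ih fr.hv j s hrest hs hroot
      have hur : (plugL L s).root = fr.hv := root_plugL L fr.hv j s hrest hroot
      rw [Frame.plug]
      refine RT.WF.node _ _ _ hwff.1 ?_ ?_
      · rw [List.map_append, List.map_cons, hur]
        exact hwff.2.1
      · intro t ht
        rcases List.mem_append.1 ht with h | h
        · exact hwff.2.2.1 t h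
        · rcases List.mem_cons.1 h with h | h
          · subst h; exact hu
          · exact hwff.2.2.2 t h

def rAt : Fin n → List (Frame n) → ℕ → Fin n
  | i, _, 0 => i
  | i, [], _+1 => i
  | _, fr :: L, p+1 => rAt fr.hv L p

lemma ctx_split {f : PolyVec (WithTop ℤ) n} :
    ∀ (L : List (Frame n)) (i j : Fin n) (p : ℕ), p ≤ L.length → CtxWF f i L j →
      CtxWF f i (L.take p) (rAt i L p) ∧ CtxWF f (rAt i L p) (L.drop p) j := by
  intro L
  induction L with
  | nil =>
      intro i j p hp h
      have hp0 : p = 0 := by simpa using hp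
      subst hp0
      exact ⟨rfl, h⟩
  | cons fr L ih =>
      intro i j p hp h
      cases p with
      | zero => exact ⟨rfl, h⟩
      | succ p =>
          obtain ⟨hfi, hwff, hrest⟩ := h
          have := ih fr.hv j p (by simp only [List.length_cons] at hp; omega) hrest
          exact ⟨⟨hfi, hwff, this.1⟩, this.2⟩

lemma rAt_drop :
    ∀ (L : List (Frame n)) (i : Fin n) (p d : ℕ), p ≤ L.length →
      rAt (rAt i L p) (L.drop p) d = rAt i L (p + d) := by
  intro L
  induction L with
  | nil =>
      intro i p d hp
      have hp0 : p = 0 := by simpa using hp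
      subst hp0
      cases d <;> rfl
  | cons fr L ih =>
      intro i p d hp
      cases p with
      | zero => rw [Nat.zero_add]; rfl
      | succ p =>
          show rAt (rAt fr.hv L p) (L.drop p) d = rAt i (fr :: L) (p + 1 + d)
          have he : p + 1 + d = (p + d) + 1 := by omega
          rw [he]
          have hple : p ≤ L.length := by simp only [List.length_cons] at hp; omega
          exact ih fr.hv p d hple

lemma exists_ge_of_foldr_max {l : List ℕ} {k : ℕ} (h : k + 1 ≤ l.foldr max 0) :
    ∃ x ∈ l, k + 1 ≤ x := by
  induction l with
  | nil => simp at h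
  | cons a l ih =>
      rcases le_max_iff.1 h with h' | h'
      · exact ⟨a, List.mem_cons_self, h'⟩
      · obtain ⟨x, hx, hx'⟩ := ih h'
        exact ⟨x, List.mem_cons_of_mem _ hx, hx'⟩

/-- Spine decomposition: a tree of height `≥ k+1` splits into a context chain of
length `k` and an inner subtree. -/
lemma spine (f : PolyVec (WithTop ℤ) n) :
    ∀ (k : ℕ) (t : RT n), RT.WF f t → k + 1 ≤ t.ht →
      ∃ (L : List (Frame n)) (u : RT n), L.length = k ∧ plugL L u = t ∧
        CtxWF f t.root L u.root ∧ RT.WF f u := by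
  intro k
  induction k with
  | zero => intro t hwf _; exact ⟨[], t, rfl, rfl, rfl, hwf⟩
  | succ k ih =>
      rintro ⟨i, m, cs⟩ hwf hht
      rw [RT.ht_node] at hht
      have h1 : k + 1 ≤ (cs.map RT.ht).foldr max 0 := by omega
      obtain ⟨x, hx, hx'⟩ := exists_ge_of_foldr_max h1
      obtain ⟨c, hc, rfl⟩ := List.mem_map.1 hx
      obtain ⟨pre, post, hcs⟩ := List.append_of_mem hc
      cases hwf with
      | node _ _ _ hm hroots hcswf =>
        obtain ⟨L, u, hlen, hplug, hctx, hu⟩ := ih c (hcswf c hc) hx'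
        refine ⟨⟨i, m, pre, c.root, post⟩ :: L, u, by simp [hlen], ?_, ?_, hu⟩
        · rw [plugL_cons, hplug, Frame.plug, hcs]
        · refine ⟨rfl, ⟨hm, ?_, ?_, ?_⟩, hctx⟩
          · rw [← hroots, hcs, List.map_append, List.map_cons]
          · intro t ht; exact hcswf t (by rw [hcs]; exact List.mem_append_left _ ht)
          · intro t ht
            exact hcswf t (by rw [hcs]; exact List.mem_append_right _ (List.mem_cons_of_mem _ ht))

lemma length_le_csz (L : List (Frame n)) : L.length ≤ csz L := by
  induction L with
  | nil => simp [csz]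
  | cons fr L ih =>
      rw [csz, List.map_cons, List.sum_cons]
      have : 1 ≤ fr.s := by rw [Frame.s]; omega
      rw [csz] at ih
      simp only [List.length_cons]
      omega

def pump (D : List (Frame n)) (u : RT n) : ℕ → RT n
  | 0 => u
  | m + 1 => plugL D (pump D u m)

lemma pump_wf {f : PolyVec (WithTop ℤ) n} {j : Fin n} {D : List (Frame n)} {u : RT n}
    (hD : CtxWF f j D j) (hu : RT.WF f u) (hru : u.root = j) :
    ∀ m, RT.WF f (pump D u m) ∧ (pump D u m).root = j := by
  intro m
  induction m with
  | zero => exact ⟨hu, hru⟩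
  | succ m ih =>
      exact ⟨WF_plugL D j j _ hD ih.1 ih.2, root_plugL D j j _ hD ih.2⟩

lemma pump_wt (D : List (Frame n)) (u : RT n) :
    ∀ m, (pump D u m).wt = m • cw D + u.wt := by
  intro m
  induction m with
  | zero => simp [pump]
  | succ m ih =>
      show (plugL D (pump D u m)).wt = _
      rw [wt_plugL, ih, succ_nsmul, ← add_assoc, add_comm (cw D) (m • cw D)]

end SintGFP
namespace SintGFP
variable {n : ℕ}

lemma coe_nsmul_wt (m : ℕ) (z : ℤ) :
    (m • ((z : ℤ) : WithTop ℤ)) = ((m • z : ℤ) : WithTop ℤ) := by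
  induction m with
  | zero => simp
  | succ m ih => rw [succ_nsmul, succ_nsmul, ih, ← WithTop.coe_add]

/-- The hard direction: if `f` has a fixed point then `ks(n) = ks(n+1)`. -/
lemma stab_of_fix {f : PolyVec (WithTop ℤ) n} {g : Fin n → WithTop ℤ}
    (hg : applyPV Sint f g = g) : kleene Sint f n = kleene Sint f (n + 1) := by
  classical
  funext i
  by_contra hne
  have hlt : kleene Sint f (n+1) i < kleene Sint f n i :=
    lt_of_le_of_ne (kleene_succ_le f n i) (fun h => hne h.symm)
  obtain ⟨t0, hwf0, hroot0, _, hwt0⟩ := wt_le_kleene f (n+1) i (ne_top_of_lt hlt)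
  have hex : ∃ s : ℕ, ∃ t : RT n, t.sz = s ∧ RT.WF f t ∧ t.root = i ∧
      t.wt < kleene Sint f n i :=
    ⟨t0.sz, t0, rfl, hwf0, hroot0, lt_of_le_of_lt hwt0 hlt⟩
  obtain ⟨t, hts, hwf, hroot, hwt⟩ := Nat.find_spec hex
  have hht : n + 1 ≤ t.ht := by
    by_contra h
    push_neg at h
    have h2 := kleene_le_wt f n t hwf (by omega)
    rw [hroot] at h2
    exact absurd hwt (not_lt.2 h2)
  obtain ⟨L, u, hlen, hplug, hctx, hu⟩ := spine f n t hwf hht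
  have hmain : ∀ p q : ℕ, p < q → q ≤ n → rAt t.root L p = rAt t.root L q → False := by
    intro p q hpq hqn hdup
    set j := rAt t.root L p with hj
    have hp_le : p ≤ L.length := by omega
    have hq_le : q ≤ L.length := by omega
    obtain ⟨hC, hrest⟩ := ctx_split L t.root u.root p hp_le hctx
    have hdl : q - p ≤ (L.drop p).length := by
      rw [List.length_drop]; omega
    obtain ⟨hD, hE⟩ := ctx_split (L.drop p) j u.root (q - p) hdl hrest
    have hmid : rAt j (L.drop p) (q - p) = j := by
      rw [hj, rAt_drop L t.root p (q-p) hp_le, show p + (q - p) = q from by omega, ← hdup]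
    rw [hmid] at hD hE
    set C := L.take p with hCdef
    set D := (L.drop p).take (q - p) with hDdef
    set E := (L.drop p).drop (q - p) with hEdef
    have hDne : D ≠ [] := by
      have hDl : D.length = q - p := by
        rw [hDdef, List.length_take, List.length_drop]; omega
      intro h0; rw [h0] at hDl; simp at hDl; omega
    have hteq : plugL C (plugL D (plugL E u)) = t := by
      rw [← plugL_append, ← plugL_append]
      have h1 : D ++ E = L.drop p := List.take_append_drop _ _
      have h2 : C ++ L.drop p = L := List.take_append_drop _ _
      rw [List.append_assoc, h1, h2, hplug]
    set u' := plugL E u with hu'def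
    have hu'wf : RT.WF f u' := WF_plugL E j u.root u hE hu rfl
    have hu'root : u'.root = j := root_plugL E j u.root u hE rfl
    have hwteq : t.wt = cw C + (cw D + u'.wt) := by
      rw [← hteq, wt_plugL, wt_plugL]
    rcases le_or_gt 0 (cw D) with hcD | hcD
    · -- nonnegative cycle: cut it out, contradicting minimality
      have ht' : (plugL C u').wt ≤ t.wt := by
        rw [wt_plugL, hwteq]
        exact add_le_add_right (le_add_of_nonneg_left hcD) _
      have hroot' : (plugL C u').root = i := by
        rw [root_plugL C t.root j u' hC hu'root]
        exact hroot
      have hlt' : (plugL C u').wt < kleene Sint f n i := lt_of_le_of_lt ht' hwt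
      have hfind := Nat.find_min' hex
        ⟨plugL C u', rfl, WF_plugL C t.root j u' hC hu'wf hu'root, hroot', hlt'⟩
      have hsz : (plugL C u').sz < t.sz := by
        have e1 : t.sz = csz C + (csz D + u'.sz) := by
          rw [← hteq, sz_plugL, sz_plugL]
        have e2 : (plugL C u').sz = csz C + u'.sz := sz_plugL _ _
        have hD1 : 1 ≤ csz D := by
          have := length_le_csz D
          have hDl : D.length = q - p := by
            rw [hDdef, List.length_take, List.length_drop]; omega
          omega
        omega
      rw [hts] at hsz
      omega
    · -- negative cycle: pump it, contradicting the existence of a fixed point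
      have htne : t.wt ≠ ⊤ := ne_top_of_lt hwt
      rw [hwteq] at htne
      have hu'ne : u'.wt ≠ ⊤ := ((WithTop.add_ne_top.1
        ((WithTop.add_ne_top.1 htne).2)).2)
      obtain ⟨z, hz⟩ := WithTop.ne_top_iff_exists.1 (ne_top_of_lt hcD)
      obtain ⟨w, hw⟩ := WithTop.ne_top_iff_exists.1 hu'ne
      have hzneg : z < 0 := by
        rw [← hz] at hcD
        exact_mod_cast hcD
      have hgle : ∀ m : ℕ, g j ≤ ((m • z + w : ℤ) : WithTop ℤ) := by
        intro m
        have h1 := fix_le_wt hg (pump D u' m).sz (pump D u' m) le_rfl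
          (pump_wf hD hu'wf hu'root m).1
        rw [(pump_wf hD hu'wf hu'root m).2, pump_wt, ← hz, ← hw, coe_nsmul_wt,
          ← WithTop.coe_add] at h1
        exact h1
      cases hgj : g j with
      | top =>
          have h0 := hgle 0
          rw [hgj] at h0
          exact absurd h0 (by simp)
      | coe y =>
          have hy := hgle (w - y + 1).toNat
          rw [hgj, WithTop.coe_le_coe] at hy
          have hm : (w - y + 1 : ℤ) ≤ ((w - y + 1).toNat : ℤ) := Int.self_le_toNat _
          have hm0 : (0 : ℤ) ≤ ((w - y + 1).toNat : ℤ) := Int.ofNat_nonneg _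
          rw [nsmul_eq_mul] at hy
          set mz : ℤ := ((w - y + 1).toNat : ℤ)
          have hkey : mz * (z + 1) ≤ 0 :=
            mul_nonpos_of_nonneg_of_nonpos hm0 (by omega)
          have hexp : mz * (z + 1) = mz * z + mz := by ring
          linarith
  have hcard : Fintype.card (Fin n) < Fintype.card (Fin (n+1)) := by simp
  obtain ⟨a, b, hab, hfab⟩ := Fintype.exists_ne_map_eq_of_card_lt
    (fun a : Fin (n+1) => rAt t.root L a.val) hcard
  rcases lt_or_gt_of_ne hab with h | h
  · exact hmain a.val b.val h (Nat.lt_succ_iff.1 b.isLt) hfab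
  · exact hmain b.val a.val h (Nat.lt_succ_iff.1 a.isLt) hfab.symm

end SintGFP
/-- Corollary 1: over the integer min-plus semiring `S_int`, `f` has a greatest fixed
point iff `ks(n) = ks(n+1)`, and in that case `ks(n)` is the greatest fixed point. -/
theorem sint_gfp_iff_stabilizes {n : ℕ} (f : PolyVec (WithTop ℤ) n) :
    ((∃ g : Fin n → WithTop ℤ, isGFP Sint f g) ↔ kleene Sint f n = kleene Sint f (n + 1)) ∧
    (kleene Sint f n = kleene Sint f (n + 1) → isGFP Sint f (kleene Sint f n)) := by
  have part2 : kleene Sint f n = kleene Sint f (n + 1) → isGFP Sint f (kleene Sint f n) := by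
    intro h
    constructor
    · exact h.symm
    · intro v hv i
      rw [SintGFP.sint_le_iff]
      exact SintGFP.fix_le_kleene hv n i
  refine ⟨⟨?_, fun h => ⟨_, part2 h⟩⟩, part2⟩
  rintro ⟨g, hg1, -⟩
  exact SintGFP.stab_of_fix hg1
end
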